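/- Let n = 2^r p, where p is an odd prime and r ≥ 1. Let S be a sequence in Z_n of length at least n + 2 which has no U(n)-weighted zero-sum subsequence of length n. Then S has at most two odd terms (terms whose image under the natural map Z_n → Z_2 is 1). Moreover, if S has exactly two odd terms, then exactly one of these two odd terms is a unit of Z_n, and every other term of S is divisible by p (i.e., lies in pZ_n). -/

import Mathlib

open Classical in
/-- The number of terms of the sequence `S` satisfying the predicate `P`. -/
noncomputable def pcount {α : Type*} (P : α → Prop) (S : List α) : ℕ :=
  S.countP fun x => decide (P x)

/-- `S` is an `A`-weighted zero-sum sequence in `ZMod n`: there are weights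
`a i ∈ A` with `∑ a i * x i = 0`. -/
def IsWZSum {n : ℕ} (A : Set (ZMod n)) (S : List (ZMod n)) : Prop :=
  ∃ w : List (ZMod n), w.length = S.length ∧ (∀ a ∈ w, a ∈ A) ∧
    (List.zipWith (· * ·) w S).sum = 0

/-- `S` has an `A`-weighted zero-sum subsequence of length `t ≥ 1`. -/
def HasWZSS {n : ℕ} (A : Set (ZMod n)) (S : List (ZMod n)) (t : ℕ) : Prop :=
  0 < t ∧ ∃ T : List (ZMod n), T.Sublist S ∧ T.length = t ∧ IsWZSum A T

/-- `S` has a nonempty `A`-weighted zero-sum subsequence. -/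
def HasWZS {n : ℕ} (A : Set (ZMod n)) (S : List (ZMod n)) : Prop :=
  ∃ T : List (ZMod n), T.Sublist S ∧ T ≠ [] ∧ IsWZSum A T

/-- The `A`-weighted Davenport constant `D_A(n)`: the least `k > 0` such that every
sequence of length `k` in `ZMod n` has a nonempty `A`-weighted zero-sum subsequence. -/
noncomputable def DavC (n : ℕ) (A : Set (ZMod n)) : ℕ :=
  sInf {k | 0 < k ∧ ∀ S : List (ZMod n), S.length = k → HasWZS A S}

/-- The `A`-weighted Gao constant `E_A(n)`: the least `k > 0` such that every
sequence of length `k` in `ZMod n` has an `A`-weighted zero-sum subsequence of length `n`. -/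
noncomputable def GaoC (n : ℕ) (A : Set (ZMod n)) : ℕ :=
  sInf {k | 0 < k ∧ ∀ S : List (ZMod n), S.length = k → HasWZSS A S n}

/-- The set of units of `ZMod n`. -/
def U (n : ℕ) : Set (ZMod n) := {x | IsUnit x}

/-- An `A`-extremal sequence for the Gao constant: a sequence of length `E_A(n) - 1`
with no `A`-weighted zero-sum subsequence of length `n`. -/
def IsGaoExtremal (n : ℕ) (A : Set (ZMod n)) (S : List (ZMod n)) : Prop :=
  S.length = GaoC n A - 1 ∧ ¬ HasWZSS A S n

/-- `S` and `T` are `A`-equivalent: there are a unit `c`, weights `a i ∈ A` and a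
permutation matching the multiset of terms `c * y j` with the multiset `a i * x i`. -/
def AEquiv {n : ℕ} (A : Set (ZMod n)) (S T : List (ZMod n)) : Prop :=
  ∃ c : ZMod n, IsUnit c ∧ ∃ w : List (ZMod n), w.length = S.length ∧
    (∀ a ∈ w, a ∈ A) ∧ (T.map fun y => c * y).Perm (List.zipWith (· * ·) w S)

/-- For `n = 2 ^ r * p`, `p` an odd prime, `r ≥ 1`: a sequence of length at least `n + 2`
with no `U(n)`-weighted zero-sum subsequence of length `n` has at most two odd terms;
and if it has exactly two odd terms, then exactly one of them is a unit and every other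
term is divisible by `p` (i.e. exactly one term of `S` is not divisible by `p`, and it is
an odd unit). -/
private lemma zmod2_cases : ∀ z : ZMod 2, z = 0 ∨ z = 1 := by decide

private lemma prod_isUnit {M N : Type*} [Monoid M] [Monoid N] {z : M × N}
    (h1 : IsUnit z.1) (h2 : IsUnit z.2) : IsUnit z := by
  obtain ⟨u, hu⟩ := h1
  obtain ⟨v, hv⟩ := h2
  refine ⟨⟨z, (↑u⁻¹, ↑v⁻¹), ?_, ?_⟩, rfl⟩ <;>
    refine Prod.ext ?_ ?_ <;> simp [← hu, ← hv]

private lemma ringHom_eq_castHom {N m : ℕ} (hm : m ∣ N) (f : ZMod N →+* ZMod m) (z : ZMod N) :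
    f z = ZMod.castHom hm (ZMod m) z := by
  have h : f = ZMod.castHom hm (ZMod m) := Subsingleton.elim _ _
  rw [h]

private lemma isUnit_two_pow_iff (r : ℕ) (hr : 1 ≤ r) (h22 : (2:ℕ) ∣ 2^r) (y : ZMod (2^r)) :
    IsUnit y ↔ ZMod.castHom h22 (ZMod 2) y = 1 := by
  haveI : NeZero (2^r) := ⟨pow_ne_zero r two_ne_zero⟩
  haveI : Fact (Nat.Prime 2) := ⟨Nat.prime_two⟩
  constructor
  · intro h
    have h1 : IsUnit (ZMod.castHom h22 (ZMod 2) y) := h.map _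
    rcases zmod2_cases (ZMod.castHom h22 (ZMod 2) y) with h0 | h1'
    · rw [h0] at h1
      exact (isUnit_iff_ne_zero.mp h1 rfl).elim
    · exact h1'
  · intro h
    have hy : ((y.val : ℕ) : ZMod (2^r)) = y := ZMod.natCast_zmod_val y
    have hthis := map_natCast (ZMod.castHom h22 (ZMod 2)) y.val
    rw [hy] at hthis
    have hcast : ((y.val : ℕ) : ZMod 2) = 1 := by rw [← hthis, h]
    have hnd : ¬ (2 ∣ y.val) := by
      intro hd
      rw [(ZMod.natCast_eq_zero_iff y.val 2).mpr hd] at hcast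
      exact one_ne_zero (α := ZMod 2) hcast.symm
    have hco : Nat.Coprime (y.val) (2^r) :=
      Nat.Coprime.pow_right r (((Nat.Prime.coprime_iff_not_dvd Nat.prime_two).mpr hnd).symm)
    rw [← hy]
    exact (ZMod.isUnit_iff_coprime y.val (2^r)).mpr hco

private lemma exists_weights_two_pow (r : ℕ) (hr : 1 ≤ r) {L : ℕ} (a : Fin L → ZMod (2^r))
    (hcard : (Finset.univ.filter fun k => IsUnit (a k)).card % 2 = 0)
    (hpos : 0 < (Finset.univ.filter fun k => IsUnit (a k)).card) :
    ∃ u : Fin L → ZMod (2^r), (∀ k, IsUnit (u k)) ∧ ∑ k, u k * a k = 0 := by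
  classical
  have h22 : (2:ℕ) ∣ 2^r := dvd_pow_self 2 (by omega)
  set π := ZMod.castHom h22 (ZMod 2) with hπ
  have hunit : ∀ y, IsUnit y ↔ π y = 1 := isUnit_two_pow_iff r hr h22
  obtain ⟨i, hi⟩ := Finset.card_pos.mp hpos
  have hiu : IsUnit (a i) := (Finset.mem_filter.mp hi).2
  set s : ZMod (2^r) := ∑ k ∈ Finset.univ.erase i, a k with hs
  have hind : ∀ k, π (a k) = if IsUnit (a k) then 1 else 0 := by
    intro k
    by_cases h : IsUnit (a k)
    · simp only [h, if_true]
      exact (hunit _).mp h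
    · simp only [h, if_false]
      rcases zmod2_cases (π (a k)) with h0 | h1
      · exact h0
      · exact absurd ((hunit _).mpr h1) h
  have hπtot : π (∑ k, a k) = 0 := by
    rw [map_sum, Finset.sum_congr rfl fun k _ => hind k, Finset.sum_boole]
    exact (ZMod.natCast_eq_zero_iff _ 2).mpr (Nat.dvd_of_mod_eq_zero hcard)
  have htot : ∑ k, a k = a i + s := (Finset.add_sum_erase Finset.univ a (Finset.mem_univ i)).symm
  have hπs : π s = 1 := by
    have h1 : π (a i) = 1 := (hunit _).mp hiu
    have hadd : π (a i) + π s = 0 := by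
      rw [← map_add, ← htot]; exact hπtot
    rw [h1] at hadd
    have hdi : ∀ z : ZMod 2, 1 + z = 0 → z = 1 := by decide
    exact hdi _ hadd
  have hsu : IsUnit s := (hunit s).mpr hπs
  obtain ⟨ai, hai⟩ := hiu
  refine ⟨fun k => if k = i then -s * ↑ai⁻¹ else 1, fun k => ?_, ?_⟩
  · by_cases h : k = i
    · simp only [h, if_true]
      exact (hsu.neg).mul (Units.isUnit _)
    · simp [h]
  · rw [← Finset.add_sum_erase _ _ (Finset.mem_univ i)]
    have hrest : ∑ k ∈ Finset.univ.erase i, (if k = i then -s * ↑ai⁻¹ else 1) * a k = s := by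
      rw [hs]
      apply Finset.sum_congr rfl
      intro k hk
      rw [if_neg (Finset.mem_erase.mp hk).1, one_mul]
    beta_reduce
    rw [hrest, if_pos rfl, ← hai, mul_assoc, Units.inv_mul, mul_one]
    exact neg_add_cancel s

private lemma exists_weights_p (p : ℕ) (hp : p.Prime) (hpodd : p ≠ 2) {L : ℕ} (b : Fin L → ZMod p)
    (h : (Finset.univ.filter fun k => b k ≠ 0).card ≠ 1) :
    ∃ v : Fin L → ZMod p, (∀ k, IsUnit (v k)) ∧ ∑ k, v k * b k = 0 := by
  classical
  haveI : Fact p.Prime := ⟨hp⟩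
  rcases Nat.lt_or_ge (Finset.univ.filter fun k => b k ≠ 0).card 2 with hlt | hge
  · have h0 : (Finset.univ.filter fun k => b k ≠ 0).card = 0 := by omega
    have hall : ∀ k, b k = 0 := by
      intro k
      by_contra hk
      have hm : k ∈ Finset.univ.filter fun k => b k ≠ 0 :=
        Finset.mem_filter.mpr ⟨Finset.mem_univ _, hk⟩
      rw [Finset.card_eq_zero] at h0
      rw [h0] at hm
      exact absurd hm (Finset.notMem_empty k)
    exact ⟨fun _ => 1, fun _ => isUnit_one, by simp [hall]⟩
  · obtain ⟨i, hi, j, hj, hij⟩ := Finset.one_lt_card.mp hge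
    have hbi : b i ≠ 0 := (Finset.mem_filter.mp hi).2
    have hbj : b j ≠ 0 := (Finset.mem_filter.mp hj).2
    set s : ZMod p := ∑ k ∈ (Finset.univ.erase i).erase j, b k with hs
    have hcard3 : 2 < Fintype.card (ZMod p) := by
      rw [ZMod.card]
      have := hp.two_le
      omega
    obtain ⟨c, hc⟩ : ∃ c : ZMod p, c ∉ ({0, -s * (b j)⁻¹} : Finset (ZMod p)) := by
      by_contra hno
      push_neg at hno
      have hsub : (Finset.univ : Finset (ZMod p)) ⊆ {0, -s * (b j)⁻¹} := fun z _ => hno z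
      have h1 := Finset.card_le_card hsub
      rw [Finset.card_univ] at h1
      have hle : ({0, -s * (b j)⁻¹} : Finset (ZMod p)).card ≤ 2 :=
        (Finset.card_insert_le _ _).trans (by simp)
      omega
    have hc0 : c ≠ 0 := by intro h'; exact hc (by simp [h'])
    have hct : c ≠ -s * (b j)⁻¹ := by intro h'; exact hc (by simp [h'])
    set m : ZMod p := -(s + c * b j) with hm
    have hm0 : m ≠ 0 := by
      intro h0
      apply hct
      have hcb : c * b j = -s := by
        have := neg_eq_zero.mp h0
        linear_combination this
      calc c = c * b j * (b j)⁻¹ := by rw [mul_assoc, mul_inv_cancel₀ hbj, mul_one]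
      _ = -s * (b j)⁻¹ := by rw [hcb]
    refine ⟨fun k => if k = i then m * (b i)⁻¹ else if k = j then c else 1, fun k => ?_, ?_⟩
    · by_cases h1 : k = i
      · simp only [h1, if_true]
        exact (mul_ne_zero hm0 (inv_ne_zero hbi)).isUnit
      · by_cases h2 : k = j <;> simp [h1, h2, Ne.symm hij, isUnit_iff_ne_zero, hc0]
    · have hj' : j ∈ Finset.univ.erase i := Finset.mem_erase.mpr ⟨Ne.symm hij, Finset.mem_univ _⟩
      rw [← Finset.add_sum_erase _ _ (Finset.mem_univ i), ← Finset.add_sum_erase _ _ hj']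
      have hrest : ∑ k ∈ (Finset.univ.erase i).erase j,
          (if k = i then m * (b i)⁻¹ else if k = j then c else 1) * b k = s := by
        rw [hs]
        apply Finset.sum_congr rfl
        intro k hk
        have hk1 := (Finset.mem_erase.mp hk).1
        have hk2 := (Finset.mem_erase.mp (Finset.mem_erase.mp hk).2).1
        rw [if_neg hk2, if_neg hk1, one_mul]
      beta_reduce
      rw [hrest, if_pos rfl, if_neg (Ne.symm hij), if_pos rfl, mul_assoc,
        inv_mul_cancel₀ hbi, mul_one, hm]
      ring

private lemma zipWith_ofFn {M : Type*} [Mul M] : ∀ (T : List M) (f : Fin T.length → M),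
    List.zipWith (· * ·) (List.ofFn f) T = List.ofFn (fun k => f k * T.get k)
  | [], _ => by simp
  | x :: t, f => by
    rw [List.ofFn_succ, List.ofFn_succ, List.zipWith_cons_cons,
      zipWith_ofFn t (fun i => f i.succ)]
    simp

private lemma countP_eq_card {α : Type*} (T : List α) (q : α → Bool) :
    T.countP q = (Finset.univ.filter fun k : Fin T.length => q (T.get k) = true).card := by
  induction T with
  | nil => simp
  | cons x t ih =>
    rw [List.countP_cons, ih, Finset.card_filter, Finset.card_filter]
    simp only [List.length_cons]
    rw [Fin.sum_univ_succ]
    simp [Nat.add_comm]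
    split_ifs <;> simp_all

private lemma wzsum_of_counts (r p : ℕ) (hr : 1 ≤ r) (hp : p.Prime) (hpodd : p ≠ 2)
    (h2 : (2:ℕ) ∣ 2^r * p) (hpd : p ∣ 2^r * p)
    (q1 q2 : ZMod (2^r * p) → Bool)
    (hq1 : ∀ x, q1 x = true ↔ ZMod.castHom h2 (ZMod 2) x = 1)
    (hq2 : ∀ x, q2 x = true ↔ ZMod.castHom hpd (ZMod p) x ≠ 0)
    (T : List (ZMod (2^r * p)))
    (ho : T.countP q1 % 2 = 0) (ho2 : 0 < T.countP q1) (hpz : T.countP q2 ≠ 1) :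
    IsWZSum (U (2^r * p)) T := by
  classical
  haveI : Fact p.Prime := ⟨hp⟩
  have h22 : (2:ℕ) ∣ 2^r := dvd_pow_self 2 (by omega)
  have hco : Nat.Coprime (2^r) p :=
    Nat.Coprime.pow_left r ((Nat.coprime_primes Nat.prime_two hp).mpr (fun h => hpodd h.symm))
  set e := ZMod.chineseRemainder hco with he
  set L := T.length with hL
  set x : Fin L → ZMod (2^r * p) := T.get with hx
  set a : Fin L → ZMod (2^r) := fun k => (e (x k)).1 with ha
  set b : Fin L → ZMod p := fun k => (e (x k)).2 with hb
  have hA : ∀ z : ZMod (2^r * p),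
      ZMod.castHom h22 (ZMod 2) (e z).1 = ZMod.castHom h2 (ZMod 2) z :=
    fun z => ringHom_eq_castHom h2
      ((ZMod.castHom h22 (ZMod 2)).comp ((RingHom.fst _ _).comp e.toRingHom)) z
  have hB : ∀ z : ZMod (2^r * p), (e z).2 = ZMod.castHom hpd (ZMod p) z :=
    fun z => ringHom_eq_castHom hpd ((RingHom.snd _ _).comp e.toRingHom) z
  have hq1' : ∀ k, (q1 (x k) = true) ↔ IsUnit (a k) := by
    intro k
    rw [hq1, isUnit_two_pow_iff r hr h22 (a k), ha]
    simp only []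
    rw [hA (x k)]
  have hq2' : ∀ k, (q2 (x k) = true) ↔ b k ≠ 0 := by
    intro k
    rw [hq2, hb]
    simp only []
    rw [hB (x k)]
  have hcard1 : (Finset.univ.filter fun k => IsUnit (a k)).card = T.countP q1 := by
    rw [countP_eq_card T q1]
    congr 1
    exact (Finset.filter_congr (fun k _ => hq1' k)).symm
  have hcard2 : (Finset.univ.filter fun k => b k ≠ 0).card = T.countP q2 := by
    rw [countP_eq_card T q2]
    congr 1
    exact (Finset.filter_congr (fun k _ => hq2' k)).symm
  obtain ⟨u, hu, hus⟩ := exists_weights_two_pow r hr a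
    (by rw [hcard1]; exact ho) (by rw [hcard1]; exact ho2)
  obtain ⟨v, hv, hvs⟩ := exists_weights_p p hp hpodd b (by rw [hcard2]; exact hpz)
  refine ⟨List.ofFn (fun k => e.symm (u k, v k)), by simp [hL], ?_, ?_⟩
  · intro w hw
    rw [List.mem_ofFn] at hw
    obtain ⟨k, rfl⟩ := hw
    show IsUnit _
    exact (prod_isUnit (hu k) (hv k)).map (e.symm : ZMod (2^r) × ZMod p →+* ZMod (2^r * p))
  · rw [zipWith_ofFn, List.sum_ofFn]
    apply e.injective
    rw [map_sum, map_zero]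
    have hterm : ∀ k, e (e.symm (u k, v k) * T.get k) = (u k * a k, v k * b k) := by
      intro k
      rw [map_mul, RingEquiv.apply_symm_apply]
      rfl
    rw [Finset.sum_congr rfl (fun k _ => hterm k)]
    refine Prod.ext ?_ ?_
    · rw [Prod.fst_sum]
      simpa using hus
    · rw [Prod.snd_sum]
      simpa using hvs

private lemma select_abcd (al be ga de n L : ℕ) (hL : al + be + ga + de = L) (h2 : n + 2 ≤ L)
    (hn : 6 ≤ n) (hne : n % 2 = 0)
    (h : 3 ≤ al + be ∨ (al + be = 2 ∧ (al + ga = 0 ∨ 2 ≤ al + ga ∨ (ga = 1 ∧ al = 0)))) :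
    ∃ a b c d, a ≤ al ∧ b ≤ be ∧ c ≤ ga ∧ d ≤ de ∧ a + b + c + d = n ∧
      (a + b) % 2 = 0 ∧ 2 ≤ a + b ∧ a + c ≠ 1 := by
  rcases h with h3 | ⟨ho2, hsub⟩
  · by_cases hP : al + ga ≤ 1
    · obtain ⟨m, hm⟩ : ∃ m, m = min be n - min be n % 2 := ⟨_, rfl⟩
      refine ⟨0, m, 0, n - m, ?_, ?_, ?_, ?_, ?_, ?_, ?_, ?_⟩ <;> omega
    · by_cases hg : 2 ≤ ga
      · obtain ⟨t, ht⟩ : ∃ t, t = min (al + be) (n - 2) - min (al + be) (n - 2) % 2 := ⟨_, rfl⟩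
        refine ⟨min al t, t - min al t, min ga (n - t), n - t - min ga (n - t),
          ?_, ?_, ?_, ?_, ?_, ?_, ?_, ?_⟩ <;> omega
      · by_cases hal : 2 ≤ al
        · obtain ⟨t, ht⟩ : ∃ t, t = min (al + be) n - min (al + be) n % 2 := ⟨_, rfl⟩
          refine ⟨min al t, t - min al t, min ga (n - t), n - t - min ga (n - t),
            ?_, ?_, ?_, ?_, ?_, ?_, ?_, ?_⟩ <;> omega
        · by_cases h4 : n ≤ de + (min be n - min be n % 2)
          · obtain ⟨m, hm⟩ : ∃ m, m = min be n - min be n % 2 := ⟨_, rfl⟩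
            refine ⟨0, m, 0, n - m, ?_, ?_, ?_, ?_, ?_, ?_, ?_, ?_⟩ <;> omega
          · refine ⟨1, be - 2, 1, n - be, ?_, ?_, ?_, ?_, ?_, ?_, ?_, ?_⟩ <;> omega
  · rcases hsub with hP0 | hP2 | ⟨hg1, ha0⟩
    · refine ⟨0, 2, 0, n - 2, ?_, ?_, ?_, ?_, ?_, ?_, ?_, ?_⟩ <;> omega
    · refine ⟨min al 2, 2 - min al 2, min ga (n - 2), n - 2 - min ga (n - 2),
        ?_, ?_, ?_, ?_, ?_, ?_, ?_, ?_⟩ <;> omega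
    · refine ⟨0, 2, 0, n - 2, ?_, ?_, ?_, ?_, ?_, ?_, ?_, ?_⟩ <;> omega

private lemma build_wzss (r p : ℕ) (hr : 1 ≤ r) (hp : p.Prime) (hpodd : p ≠ 2)
    (h2 : (2:ℕ) ∣ 2^r * p) (hpd : p ∣ 2^r * p)
    (q1 q2 : ZMod (2^r * p) → Bool)
    (hq1 : ∀ x, q1 x = true ↔ ZMod.castHom h2 (ZMod 2) x = 1)
    (hq2 : ∀ x, q2 x = true ↔ ZMod.castHom hpd (ZMod p) x ≠ 0)
    (S : List (ZMod (2^r * p))) (hlen : 2^r * p + 2 ≤ S.length)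
    (hsel : 3 ≤ ((S.filter q1).filter q2).length + ((S.filter q1).filter (fun z => !q2 z)).length ∨
      (((S.filter q1).filter q2).length + ((S.filter q1).filter (fun z => !q2 z)).length = 2 ∧
       (((S.filter q1).filter q2).length + ((S.filter (fun z => !q1 z)).filter q2).length = 0 ∨
        2 ≤ ((S.filter q1).filter q2).length + ((S.filter (fun z => !q1 z)).filter q2).length ∨
        (((S.filter (fun z => !q1 z)).filter q2).length = 1 ∧
          ((S.filter q1).filter q2).length = 0)))) :
    HasWZSS (U (2^r * p)) S (2^r * p) := by
  classical
  have hp3 : 3 ≤ p := by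
    have := hp.two_le
    omega
  have h2r : 2 ≤ 2^r := by
    calc 2 = 2^1 := rfl
    _ ≤ 2^r := Nat.pow_le_pow_right (by norm_num) hr
  have hn6 : 6 ≤ 2^r * p := by
    calc 6 = 2 * 3 := rfl
    _ ≤ 2^r * p := Nat.mul_le_mul h2r hp3
  have hne : (2^r * p) % 2 = 0 := by omega
  set SA := (S.filter q1).filter q2 with hSA
  set SB := (S.filter q1).filter (fun z => !q2 z) with hSB
  set SC := (S.filter (fun z => !q1 z)).filter q2 with hSC
  set SD := (S.filter (fun z => !q1 z)).filter (fun z => !q2 z) with hSD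
  have hAB : (SA ++ SB).Perm (S.filter q1) := List.filter_append_perm q2 _
  have hCD : (SC ++ SD).Perm (S.filter (fun z => !q1 z)) := List.filter_append_perm q2 _
  have hS : ((S.filter q1) ++ (S.filter fun z => !q1 z)).Perm S := List.filter_append_perm q1 S
  have hLtot : SA.length + SB.length + SC.length + SD.length = S.length := by
    have e1 := hAB.length_eq
    have e2 := hCD.length_eq
    have e3 := hS.length_eq
    rw [List.length_append] at e1 e2 e3
    omega
  obtain ⟨a, b, c, d, hle1, hle2, hle3, hle4, hsum, hpar, htwo, hac⟩ :=
    select_abcd SA.length SB.length SC.length SD.length (2^r * p) S.length hLtot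
      hlen hn6 (by omega) hsel
  set T0 := SA.take a ++ (SB.take b ++ (SC.take c ++ SD.take d)) with hT0
  have hsubl : T0.Sublist (SA ++ (SB ++ (SC ++ SD))) :=
    (List.take_sublist a SA).append ((List.take_sublist b SB).append
      ((List.take_sublist c SC).append (List.take_sublist d SD)))
  have hperm : (SA ++ (SB ++ (SC ++ SD))).Perm S := by
    have h1 : SA ++ (SB ++ (SC ++ SD)) = (SA ++ SB) ++ (SC ++ SD) := by
      rw [List.append_assoc]
    rw [h1]
    exact (hAB.append hCD).trans hS
  have hsp : List.Subperm T0 S := hsubl.subperm.trans hperm.subperm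
  obtain ⟨T, hTperm, hTsub⟩ := hsp
  -- membership facts
  have hmemA : ∀ z ∈ SA.take a, q1 z = true ∧ q2 z = true := fun z hz => by
    have hz' := List.mem_of_mem_take hz
    exact ⟨List.of_mem_filter (List.mem_of_mem_filter hz'), List.of_mem_filter hz'⟩
  have hmemB : ∀ z ∈ SB.take b, q1 z = true ∧ q2 z = false := fun z hz => by
    have hz' := List.mem_of_mem_take hz
    have := List.of_mem_filter hz'
    simp only [Bool.not_eq_true'] at this
    exact ⟨List.of_mem_filter (List.mem_of_mem_filter hz'), this⟩
  have hmemC : ∀ z ∈ SC.take c, q1 z = false ∧ q2 z = true := fun z hz => by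
    have hz' := List.mem_of_mem_take hz
    have := List.of_mem_filter (List.mem_of_mem_filter hz')
    simp only [Bool.not_eq_true'] at this
    exact ⟨this, List.of_mem_filter hz'⟩
  have hmemD : ∀ z ∈ SD.take d, q1 z = false ∧ q2 z = false := fun z hz => by
    have hz' := List.mem_of_mem_take hz
    have h1 := List.of_mem_filter (List.mem_of_mem_filter hz')
    have h2' := List.of_mem_filter hz'
    simp only [Bool.not_eq_true'] at h1 h2'
    exact ⟨h1, h2'⟩
  have hlA : (SA.take a).length = a := by rw [List.length_take]; omega
  have hlB : (SB.take b).length = b := by rw [List.length_take]; omega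
  have hlC : (SC.take c).length = c := by rw [List.length_take]; omega
  have hlD : (SD.take d).length = d := by rw [List.length_take]; omega
  have hcnt1 : T0.countP q1 = a + b := by
    rw [hT0, List.countP_append, List.countP_append, List.countP_append]
    rw [List.countP_eq_length.mpr (fun z hz => (hmemA z hz).1),
      List.countP_eq_length.mpr (fun z hz => (hmemB z hz).1),
      List.countP_eq_zero.mpr (fun z hz => by simp [(hmemC z hz).1]),
      List.countP_eq_zero.mpr (fun z hz => by simp [(hmemD z hz).1]), hlA, hlB]
    omega
  have hcnt2 : T0.countP q2 = a + c := by
    rw [hT0, List.countP_append, List.countP_append, List.countP_append]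
    rw [List.countP_eq_length.mpr (fun z hz => (hmemA z hz).2),
      List.countP_eq_zero.mpr (fun z hz => by simp [(hmemB z hz).2]),
      List.countP_eq_length.mpr (fun z hz => (hmemC z hz).2),
      List.countP_eq_zero.mpr (fun z hz => by simp [(hmemD z hz).2]), hlA, hlC]
    omega
  have hT0len : T0.length = 2^r * p := by
    rw [hT0, List.length_append, List.length_append, List.length_append,
      hlA, hlB, hlC, hlD]
    omega
  refine ⟨by omega, T, hTsub, by rw [hTperm.length_eq, hT0len], ?_⟩
  apply wzsum_of_counts r p hr hp hpodd h2 hpd q1 q2 hq1 hq2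
  · rw [hTperm.countP_eq, hcnt1]; omega
  · rw [hTperm.countP_eq, hcnt1]; omega
  · rw [hTperm.countP_eq, hcnt2]; omega

private lemma isUnit_char (r p : ℕ) (hr : 1 ≤ r) (hp : p.Prime) (hpodd : p ≠ 2)
    (h2 : (2:ℕ) ∣ 2^r * p) (hpd : p ∣ 2^r * p) (z : ZMod (2^r * p)) :
    IsUnit z ↔ (ZMod.castHom h2 (ZMod 2) z = 1 ∧ ZMod.castHom hpd (ZMod p) z ≠ 0) := by
  classical
  haveI : Fact p.Prime := ⟨hp⟩
  have h22 : (2:ℕ) ∣ 2^r := dvd_pow_self 2 (by omega)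
  have hco : Nat.Coprime (2^r) p :=
    Nat.Coprime.pow_left r ((Nat.coprime_primes Nat.prime_two hp).mpr (fun h => hpodd h.symm))
  set e := ZMod.chineseRemainder hco with he
  have hA : ZMod.castHom h22 (ZMod 2) (e z).1 = ZMod.castHom h2 (ZMod 2) z :=
    ringHom_eq_castHom h2
      ((ZMod.castHom h22 (ZMod 2)).comp ((RingHom.fst _ _).comp e.toRingHom)) z
  have hB : (e z).2 = ZMod.castHom hpd (ZMod p) z :=
    ringHom_eq_castHom hpd ((RingHom.snd _ _).comp e.toRingHom) z
  constructor
  · intro h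
    have h1 : IsUnit (e z) := h.map (e : ZMod (2^r * p) →+* ZMod (2^r) × ZMod p)
    refine ⟨?_, ?_⟩
    · rw [← hA]
      exact (isUnit_two_pow_iff r hr h22 _).mp (h1.map (RingHom.fst _ _))
    · rw [← hB]
      exact isUnit_iff_ne_zero.mp (h1.map (RingHom.snd _ _))
  · rintro ⟨ha, hb⟩
    have h1 : IsUnit (e z) := prod_isUnit
      ((isUnit_two_pow_iff r hr h22 _).mpr (by rw [hA]; exact ha))
      (isUnit_iff_ne_zero.mpr (by rw [hB]; exact hb))
    have h3 := h1.map (e.symm : ZMod (2^r) × ZMod p →+* ZMod (2^r * p))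
    simpa using h3

theorem at_most_two_odd_terms (r p : ℕ) (hr : 1 ≤ r) (hp : p.Prime) (hpodd : p ≠ 2)
    (S : List (ZMod (2 ^ r * p)))
    (hlen : 2 ^ r * p + 2 ≤ S.length)
    (hno : ¬ HasWZSS (U (2 ^ r * p)) S (2 ^ r * p)) :
    pcount (fun x => ZMod.castHom
        (dvd_mul_of_dvd_left (dvd_pow_self 2 (by omega)) p) (ZMod 2) x = 1) S ≤ 2 ∧
    (pcount (fun x => ZMod.castHom
        (dvd_mul_of_dvd_left (dvd_pow_self 2 (by omega)) p) (ZMod 2) x = 1) S = 2 →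
      pcount (fun x => ZMod.castHom
          (dvd_mul_of_dvd_left (dvd_pow_self 2 (by omega)) p) (ZMod 2) x = 1 ∧ IsUnit x) S = 1 ∧
      pcount (fun x => ZMod.castHom (dvd_mul_left p (2 ^ r)) (ZMod p) x ≠ 0) S = 1) := by
  classical
  have hr0 : r ≠ 0 := by omega
  have h2 : (2:ℕ) ∣ 2 ^ r * p := dvd_mul_of_dvd_left (dvd_pow_self 2 hr0) p
  have hpd : p ∣ 2 ^ r * p := dvd_mul_left p (2 ^ r)
  set q1 : ZMod (2^r * p) → Bool := fun x => decide (ZMod.castHom h2 (ZMod 2) x = 1)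
    with hq1def
  set q2 : ZMod (2^r * p) → Bool := fun x => decide (ZMod.castHom hpd (ZMod p) x ≠ 0)
    with hq2def
  have hq1 : ∀ x, q1 x = true ↔ ZMod.castHom h2 (ZMod 2) x = 1 := fun x => by
    rw [hq1def]; exact decide_eq_true_iff
  have hq2 : ∀ x, q2 x = true ↔ ZMod.castHom hpd (ZMod p) x ≠ 0 := fun x => by
    rw [hq2def]; exact decide_eq_true_iff
  set SA := (S.filter q1).filter q2 with hSA
  set SB := (S.filter q1).filter (fun z => !q2 z) with hSB
  set SC := (S.filter (fun z => !q1 z)).filter q2 with hSC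
  have key : (3 ≤ SA.length + SB.length ∨ (SA.length + SB.length = 2 ∧
      (SA.length + SC.length = 0 ∨ 2 ≤ SA.length + SC.length ∨
        (SC.length = 1 ∧ SA.length = 0)))) → False :=
    fun hc => hno (build_wzss r p hr hp hpodd h2 hpd q1 q2 hq1 hq2 S hlen hc)
  have hAB : (SA ++ SB).Perm (S.filter q1) := List.filter_append_perm q2 _
  have c1 : S.countP q1 = SA.length + SB.length := by
    rw [List.countP_eq_length_filter, ← hAB.length_eq, List.length_append]
  have c2 : S.countP q2 = SA.length + SC.length := by
    have h := (List.filter_append_perm q1 S).countP_eq q2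
    rw [← h, List.countP_append, List.countP_eq_length_filter, List.countP_eq_length_filter]
  have e1 : pcount (fun x => ZMod.castHom h2 (ZMod 2) x = 1) S = S.countP q1 := by
    unfold pcount
    refine List.countP_congr ?_
    intro x _
    simp only [decide_eq_true_eq]
    exact (hq1 x).symm
  have e2 : pcount (fun x => ZMod.castHom hpd (ZMod p) x ≠ 0) S = S.countP q2 := by
    unfold pcount
    refine List.countP_congr ?_
    intro x _
    simp only [decide_eq_true_eq]
    exact (hq2 x).symm
  constructor
  · show pcount (fun x => ZMod.castHom h2 (ZMod 2) x = 1) S ≤ 2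
    rw [e1]
    by_contra hcon
    push_neg at hcon
    exact key (Or.inl (by omega))
  · intro hodd2
    replace hodd2 : pcount (fun x => ZMod.castHom h2 (ZMod 2) x = 1) S = 2 := hodd2
    rw [e1] at hodd2
    have hab : SA.length + SB.length = 2 := by omega
    have hstep1 : SA.length + SC.length = 1 := by
      by_contra hne1
      rcases Nat.lt_or_ge (SA.length + SC.length) 1 with h' | h'
      · exact key (Or.inr ⟨hab, Or.inl (by omega)⟩)
      · exact key (Or.inr ⟨hab, Or.inr (Or.inl (by omega))⟩)
    have hstep2 : SA.length = 1 := by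
      rcases Nat.eq_zero_or_pos SA.length with h0 | hpos
      · exact (key (Or.inr ⟨hab, Or.inr (Or.inr ⟨by omega, h0⟩)⟩)).elim
      · omega
    constructor
    · show pcount (fun x => ZMod.castHom h2 (ZMod 2) x = 1 ∧ IsUnit x) S = 1
      have hconv : pcount (fun x => ZMod.castHom h2 (ZMod 2) x = 1 ∧ IsUnit x) S
          = S.countP (fun z => q2 z && q1 z) := by
        unfold pcount
        refine List.countP_congr ?_
        intro z _
        simp only [decide_eq_true_eq, Bool.and_eq_true]
        rw [hq1 z, hq2 z]
        have hchar := isUnit_char r p hr hp hpodd h2 hpd z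
        constructor
        · rintro ⟨hz1, hz2⟩
          exact ⟨(hchar.mp hz2).2, hz1⟩
        · rintro ⟨hz2, hz1⟩
          exact ⟨hz1, hchar.mpr ⟨hz1, hz2⟩⟩
      rw [hconv, ← List.countP_filter, List.countP_eq_length_filter]
      exact hstep2
    · show pcount (fun x => ZMod.castHom hpd (ZMod p) x ≠ 0) S = 1
      rw [e2, c2]
      exact hstep1
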